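/- In the proof of the single-variable reduction for CTL*, the auxiliary model construction is sound: given a serial Kripke model M where p_{n+1} holds everywhere and M,s ⊨ φ', the model M' obtained by disjointly adding the chain models M₁,...,M_{n+1} and linking each state x of M to the root r_m of M_m exactly when M,x ⊨ p_m (with p false at all original states of M) satisfies: for every state x of M and every i ∈ {1,...,n+1}, M',x ⊨ EX A_i iff M,x ⊨ p_i. -/

import Mathlib

/-- CTL formulas: variables, falsehood, implication, AX, ∀U, ∃U. -/
inductive CTL : Type where
  | var : ℕ → CTL
  | bot : CTL
  | imp : CTL → CTL → CTL
  | ax : CTL → CTL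
  | au : CTL → CTL → CTL
  | eu : CTL → CTL → CTL

namespace CTL
def neg (φ : CTL) : CTL := imp φ bot
def top : CTL := imp bot bot
def conj (φ ψ : CTL) : CTL := neg (imp φ (neg ψ))
def iffc (φ ψ : CTL) : CTL := conj (imp φ ψ) (imp ψ φ)
def ex (φ : CTL) : CTL := neg (ax (neg φ))
def ef (φ : CTL) : CTL := eu top φ
def ag (φ : CTL) : CTL := neg (ef (neg φ))
end CTL

/-- Serial Kripke models. -/
structure Kripke (S : Type) where
  rel : S → S → Prop
  serial : ∀ s, ∃ t, rel s t
  val : ℕ → S → Prop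

def isPath {S : Type} (M : Kripke S) (π : ℕ → S) : Prop :=
  ∀ i, M.rel (π i) (π (i + 1))

/-- CTL satisfaction over serial Kripke models. -/
def sat {S : Type} (M : Kripke S) : CTL → S → Prop
  | .var n, s => M.val n s
  | .bot, _ => False
  | .imp a b, s => sat M a s → sat M b s
  | .ax a, s => ∀ t, M.rel s t → sat M a t
  | .au a b, s => ∀ π, isPath M π → π 0 = s →
      ∃ i, sat M b (π i) ∧ ∀ j, j < i → sat M a (π j)
  | .eu a b, s => ∃ π, isPath M π ∧ π 0 = s ∧
      ∃ i, sat M b (π i) ∧ ∀ j, j < i → sat M a (π j)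

def satisfiable (φ : CTL) : Prop := ∃ (S : Type) (M : Kripke S) (s : S), sat M φ s
def valid (φ : CTL) : Prop := ∀ (S : Type) (M : Kripke S) (s : S), sat M φ s

/-- Variable q occurs in a formula. -/
def occurs (q : ℕ) : CTL → Prop
  | .var n => n = q
  | .bot => False
  | .imp a b => occurs q a ∨ occurs q b
  | .ax a => occurs q a
  | .au a b => occurs q a ∨ occurs q b
  | .eu a b => occurs q a ∨ occurs q b

/-- Uniform substitution of ψ for variable p. -/
def subst (p : ℕ) (ψ : CTL) : CTL → CTL
  | .var n => if n = p then ψ else .var n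
  | .bot => .bot
  | .imp a b => .imp (subst p ψ a) (subst p ψ b)
  | .ax a => .ax (subst p ψ a)
  | .au a b => .au (subst p ψ a) (subst p ψ b)
  | .eu a b => .eu (subst p ψ a) (subst p ψ b)

/-- The relativizing translation ·' with guard variable q. -/
def relTr (q : ℕ) : CTL → CTL
  | .var n => .var n
  | .bot => .bot
  | .imp a b => .imp (relTr q a) (relTr q b)
  | .ax a => .ax (.imp (.var q) (relTr q a))
  | .au a b => .au (relTr q a) (CTL.conj (.var q) (relTr q b))
  | .eu a b => .eu (relTr q a) (CTL.conj (.var q) (relTr q b))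

/-- Θ = q ∧ AG(EX q ↔ q). -/
def Theta (q : ℕ) : CTL :=
  CTL.conj (.var q) (CTL.ag (CTL.iffc (CTL.ex (.var q)) (.var q)))

/-- Transition relation of the chain model M_m: state 0 = root r_m, state 1 = b^m,
state i+1 = a_i for 1 ≤ i ≤ 2m; self-loops everywhere. -/
def chainRel (m : ℕ) (s t : Fin (2 * m + 2)) : Prop :=
  (s.val = 0 ∧ (t.val = 1 ∨ t.val = 2)) ∨
  (2 ≤ s.val ∧ s.val ≤ 2 * m ∧ t.val = s.val + 1) ∨
  t = s

/-- p is true exactly at the root and the even-indexed chain states a_{2j}. -/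
def chainVal (m : ℕ) (s : Fin (2 * m + 2)) : Prop :=
  s.val = 0 ∨ (3 ≤ s.val ∧ s.val % 2 = 1)

def chainModel (m : ℕ) : Kripke (Fin (2 * m + 2)) where
  rel := chainRel m
  serial := fun s => ⟨s, Or.inr (Or.inr rfl)⟩
  val := fun n s => n = 0 ∧ chainVal m s

def chainRoot (m : ℕ) : Fin (2 * m + 2) := ⟨0, by omega⟩

/-- χ₀ = ∀□p, χ_{k+1} = p ∧ EX(¬p ∧ EX χ_k); the single variable p is var 0. -/
def chi : ℕ → CTL
  | 0 => CTL.ag (.var 0)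
  | k + 1 => CTL.conj (.var 0) (CTL.ex (CTL.conj (CTL.neg (.var 0)) (CTL.ex (chi k))))

/-- A_m = χ_m ∧ EX AG ¬p. -/
def Aform (m : ℕ) : CTL := CTL.conj (chi m) (CTL.ex (CTL.ag (CTL.neg (.var 0))))

/-- B_m = EX A_m. -/
def Bform (m : ℕ) : CTL := CTL.ex (Aform m)

/-- The substitution σ : pᵢ ↦ Bᵢ for 1 ≤ i ≤ n+1. -/
def sigmaSub (n : ℕ) : CTL → CTL
  | .var i => if 1 ≤ i ∧ i ≤ n + 1 then Bform i else .var i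
  | .bot => .bot
  | .imp a b => .imp (sigmaSub n a) (sigmaSub n b)
  | .ax a => .ax (sigmaSub n a)
  | .au a b => .au (sigmaSub n a) (sigmaSub n b)
  | .eu a b => .eu (sigmaSub n a) (sigmaSub n b)

/-- States of the extended model M': the states of M plus the disjoint union of
the chain models M_1, …, M_{n+1} (chain i has index i.val, modelling M_{i.val+1}). -/
def ExtS (S : Type) (n : ℕ) : Type := S ⊕ ((i : Fin (n + 1)) × Fin (2 * (i.val + 1) + 2))

/-- The extended model M': disjointly add the chain models M_1,…,M_{n+1} to M,
link each state x of M to the root of M_m exactly when M,x ⊨ p_m, and let p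
(var 0) be true only at the designated chain states (false at all states of M). -/
def extModel {S : Type} (M : Kripke S) (n : ℕ) : Kripke (ExtS S n) where
  rel := fun x y =>
    match x, y with
    | Sum.inl a, Sum.inl b => M.rel a b
    | Sum.inl a, Sum.inr ⟨i, t⟩ => M.val (i.val + 1) a ∧ t.val = 0
    | Sum.inr _, Sum.inl _ => False
    | Sum.inr ⟨i, s⟩, Sum.inr ⟨j, t⟩ =>
        ∃ h : i = j,
          chainRel (j.val + 1) (Fin.cast (congrArg (fun x => 2 * (x.val + 1) + 2) h) s) t
  serial := fun x => by
    cases x with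
    | inl a =>
        obtain ⟨t, ht⟩ := M.serial a
        exact ⟨Sum.inl t, ht⟩
    | inr b =>
        obtain ⟨i, s⟩ := b
        exact ⟨Sum.inr ⟨i, s⟩, rfl, Or.inr (Or.inr (by apply Fin.ext; simp))⟩
  val := fun k x =>
    match x with
    | Sum.inl a => k ≠ 0 ∧ M.val k a
    | Sum.inr ⟨i, s⟩ => k = 0 ∧ chainVal (i.val + 1) s

section Aux

variable {S : Type}

lemma sat_conj_iff (M : Kripke S) (a b : CTL) (s : S) :
    sat M (CTL.conj a b) s ↔ sat M a s ∧ sat M b s := by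
  constructor
  · intro h
    by_contra hc
    push_neg at hc
    exact h fun ha hb => hc ha hb
  · rintro ⟨ha, hb⟩ h
    exact h ha hb

lemma sat_ex_iff (M : Kripke S) (a : CTL) (s : S) :
    sat M (CTL.ex a) s ↔ ∃ t, M.rel s t ∧ sat M a t := by
  constructor
  · intro h
    by_contra hc
    push_neg at hc
    exact h fun t ht hφ => hc t ht hφ
  · rintro ⟨t, ht, hφ⟩ h
    exact h t ht hφ

lemma sat_ag_iff (M : Kripke S) (a : CTL) (s : S) :
    sat M (CTL.ag a) s ↔ ∀ π, isPath M π → π 0 = s → ∀ i, sat M a (π i) := by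
  constructor
  · intro h π hp h0 i
    by_contra hc
    exact h ⟨π, hp, h0, i, fun hb => hc hb, fun j _ => fun hb => hb⟩
  · rintro h ⟨π, hp, h0, i, hneg, -⟩
    exact hneg (h π hp h0 i)

lemma chainRel_refl (m : ℕ) (v : Fin (2 * m + 2)) : chainRel m v v :=
  Or.inr (Or.inr rfl)

lemma chainRel_cases {m : ℕ} {v t : Fin (2 * m + 2)} (h : chainRel m v t) :
    (v.val = 0 ∧ (t.val = 1 ∨ t.val = 2)) ∨
    (2 ≤ v.val ∧ v.val ≤ 2 * m ∧ t.val = v.val + 1) ∨ t.val = v.val := by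
  rcases h with h | h | h
  · exact Or.inl h
  · exact Or.inr (Or.inl h)
  · exact Or.inr (Or.inr (by rw [h]))

variable (M : Kripke S) (n : ℕ)

/-- Successors of a chain state in the extended model. -/
lemma rel_chain_iff (j : Fin (n + 1)) (v : Fin (2 * (j.val + 1) + 2)) (y : ExtS S n) :
    (extModel M n).rel (Sum.inr ⟨j, v⟩) y ↔
      ∃ t, y = Sum.inr ⟨j, t⟩ ∧ chainRel (j.val + 1) v t := by
  constructor
  · intro h
    match y with
    | Sum.inl b => exact absurd h (by simp [extModel])
    | Sum.inr ⟨j', t⟩ =>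
        obtain ⟨hj, hrel⟩ := h
        subst hj
        exact ⟨t, rfl, by simpa using hrel⟩
  · rintro ⟨t, rfl, hrel⟩
    exact ⟨rfl, by simpa using hrel⟩

/-- States with only a self-loop absorb paths. -/
lemma path_stay (j : Fin (n + 1)) (v : Fin (2 * (j.val + 1) + 2))
    (hv : v.val = 1 ∨ v.val = 2 * j.val + 3)
    (π : ℕ → ExtS S n) (hπ : isPath (extModel M n) π)
    (h0 : π 0 = Sum.inr ⟨j, v⟩) : ∀ k, π k = Sum.inr ⟨j, v⟩ := by
  intro k
  induction k with
  | zero => exact h0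
  | succ k ih =>
      have h := hπ k
      rw [ih] at h
      rw [rel_chain_iff] at h
      obtain ⟨t, hy, hrel⟩ := h
      rcases chainRel_cases hrel with h | h | h
      · omega
      · omega
      · rw [hy]
        congr 1
        exact congrArg _ (Fin.ext h)

lemma val0_chain (j : Fin (n + 1)) (v : Fin (2 * (j.val + 1) + 2)) :
    (extModel M n).val 0 (Sum.inr ⟨j, v⟩) ↔ (v.val = 0 ∨ (3 ≤ v.val ∧ v.val % 2 = 1)) := by
  simp [extModel, chainVal]

/-- Characterization of χ_k on the chain model M_{j+1} inside the extended model. -/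
def twoPath {α : Type} (u w : α) : ℕ → α
  | 0 => u
  | _ + 1 => w

lemma twoPath_isPath {α : Type} (M' : Kripke α) (u w : α)
    (h1 : M'.rel u w) (h2 : M'.rel w w) : isPath M' (twoPath u w) := by
  intro i
  cases i with
  | zero => exact h1
  | succ i => exact h2

/-- Characterization of χ_k on the chain model M_{j+1} inside the extended model. -/
lemma chi_char (j : Fin (n + 1)) : ∀ (k : ℕ) (v : Fin (2 * (j.val + 1) + 2)),
    sat (extModel M n) (chi k) (Sum.inr ⟨j, v⟩) ↔
      ((3 ≤ v.val ∧ v.val + 2 * k = 2 * j.val + 3) ∨ (v.val = 0 ∧ k = j.val + 1)) := by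
  intro k
  induction k with
  | zero =>
      intro v
      rw [chi]
      refine (sat_ag_iff _ _ _).trans ?_
      constructor
      · intro h
        by_contra hc
        push_neg at hc
        by_cases hval : v.val = 0 ∨ (3 ≤ v.val ∧ v.val % 2 = 1)
        · -- p holds at v, but v ≠ 2j+3; step to a ¬p state v+1
          have hv4 := v.isLt
          have hlt : v.val + 1 < 2 * (j.val + 1) + 2 := by
            rcases hval with h0 | h0
            · omega
            · by_contra hcon
              exact hc.1 (by omega) (by omega)
          have hrelvw : chainRel (j.val + 1) v ⟨v.val + 1, hlt⟩ := by
            rcases hval with h0 | h0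
            · exact Or.inl ⟨h0, Or.inl (by simp only [Fin.val_mk]; omega)⟩
            · exact Or.inr (Or.inl ⟨by omega, by omega, rfl⟩)
          have hnw : ¬ (extModel M n).val 0
              (Sum.inr ⟨j, (⟨v.val + 1, hlt⟩ : Fin (2 * (j.val + 1) + 2))⟩) := by
            rw [val0_chain]
            simp only [Fin.val_mk]
            rcases hval with h0 | h0 <;> omega
          exact hnw (h (twoPath (Sum.inr ⟨j, v⟩) (Sum.inr ⟨j, ⟨v.val + 1, hlt⟩⟩))
            (twoPath_isPath _ _ _
              ((rel_chain_iff M n j v _).2 ⟨_, rfl, hrelvw⟩)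
              ((rel_chain_iff M n j _ _).2 ⟨_, rfl, chainRel_refl _ _⟩)) rfl 1)
        · -- ¬p holds at v itself
          have hrefl : (extModel M n).rel (Sum.inr ⟨j, v⟩) (Sum.inr ⟨j, v⟩) :=
            (rel_chain_iff M n j v _).2 ⟨v, rfl, chainRel_refl _ v⟩
          have hv0 := h (fun _ => Sum.inr ⟨j, v⟩) (fun _ => hrefl) rfl 0
          exact hval ((val0_chain M n j v).1 hv0)
      · rintro (⟨h3, he⟩ | ⟨h0, hk⟩)
        · intro π hp hp0 i
          rw [path_stay M n j v (Or.inr (by omega)) π hp hp0 i]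
          exact (val0_chain M n j v).2 (Or.inr ⟨h3, by omega⟩)
        · omega
  | succ k ih =>
      intro v
      rw [chi]
      refine ((sat_conj_iff _ _ _ _).trans (Iff.and Iff.rfl (sat_ex_iff _ _ _))).trans ?_
      have hval0 : ∀ u : Fin (2 * (j.val + 1) + 2),
          sat (extModel M n) (CTL.var 0) (Sum.inr ⟨j, u⟩) ↔
            (u.val = 0 ∨ (3 ≤ u.val ∧ u.val % 2 = 1)) := fun u => val0_chain M n j u
      constructor
      · rintro ⟨hpv, t0, hrel0, hsat0⟩
        rw [rel_chain_iff] at hrel0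
        obtain ⟨t, rfl, hrelvt⟩ := hrel0
        replace hsat0 := (Iff.and Iff.rfl (sat_ex_iff _ _ _)).1 ((sat_conj_iff _ _ _ _).1 hsat0)
        obtain ⟨hnpt, z0, hrel1, hsat1⟩ := hsat0
        replace hrel1 := (rel_chain_iff M n _ _ _).1 hrel1
        obtain ⟨z, rfl, hreltz⟩ := hrel1
        replace hsat1 := (ih _).1 hsat1
        replace hpv := (hval0 _).1 hpv
        have hnpt' : ¬ (t.val = 0 ∨ (3 ≤ t.val ∧ t.val % 2 = 1)) :=
          fun hh => hnpt ((hval0 t).2 hh)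
        have hc1 := chainRel_cases hrelvt
        have hc2 := chainRel_cases hreltz
        have hvlt := v.isLt
        have htlt := t.isLt
        have hzlt := z.isLt
        omega
      · rintro (⟨h3, he⟩ | ⟨h0, hk⟩)
        · -- v odd, 3 ≤ v ≤ 2j+1 : go v → v+1 → v+2
          have hlt1 : v.val + 1 < 2 * (j.val + 1) + 2 := by omega
          have hlt2 : v.val + 2 < 2 * (j.val + 1) + 2 := by omega
          refine ⟨(hval0 v).2 (Or.inr ⟨h3, by omega⟩),
            Sum.inr ⟨j, ⟨v.val + 1, hlt1⟩⟩, ?_, ?_⟩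
          · refine (rel_chain_iff M n _ _ _).2 ?_
            exact ⟨_, rfl, Or.inr (Or.inl ⟨by omega, by omega, rfl⟩)⟩
          · refine (sat_conj_iff _ _ _ _).2 (And.imp_right (sat_ex_iff _ _ _).2 ?_)
            refine ⟨?_, Sum.inr ⟨j, ⟨v.val + 2, hlt2⟩⟩, ?_, ?_⟩
            · intro hp
              have hp' := (hval0 _).1 hp
              simp only [Fin.val_mk] at hp'
              omega
            · refine (rel_chain_iff M n _ _ _).2 ?_
              refine ⟨_, rfl, Or.inr (Or.inl ⟨?_, ?_, rfl⟩)⟩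
              · simp only [Fin.val_mk]; omega
              · simp only [Fin.val_mk]; omega
            · refine (ih _).2 ?_
              left
              simp only [Fin.val_mk]
              omega
        · -- v = 0, k = j : go 0 → 2 → 3
          have hlt2 : 2 < 2 * (j.val + 1) + 2 := by omega
          have hlt3 : 3 < 2 * (j.val + 1) + 2 := by omega
          refine ⟨(hval0 v).2 (Or.inl h0), Sum.inr ⟨j, ⟨2, hlt2⟩⟩, ?_, ?_⟩
          · refine (rel_chain_iff M n _ _ _).2 ?_
            exact ⟨_, rfl, Or.inl ⟨h0, Or.inr rfl⟩⟩
          · refine (sat_conj_iff _ _ _ _).2 (And.imp_right (sat_ex_iff _ _ _).2 ?_)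
            refine ⟨?_, Sum.inr ⟨j, ⟨3, hlt3⟩⟩, ?_, ?_⟩
            · intro hp
              have hp' := (hval0 _).1 hp
              simp only [Fin.val_mk] at hp'
              omega
            · refine (rel_chain_iff M n _ _ _).2 ?_
              refine ⟨_, rfl, Or.inr (Or.inl ⟨?_, ?_, rfl⟩)⟩
              · simp only [Fin.val_mk]; omega
              · simp only [Fin.val_mk]; omega
            · refine (ih _).2 ?_
              left
              simp only [Fin.val_mk]
              omega

end Aux

/-- Soundness of the auxiliary model construction: if p_{n+1} holds everywhere in
the serial model M and M,s ⊨ φ', then in the extended model M', for every state x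
of M and every i ∈ {1,…,n+1}, M',x ⊨ EX A_i iff M,x ⊨ p_i. -/
theorem ext_model_sound {S : Type} (M : Kripke S) (n : ℕ) (φ : CTL) (s : S)
    (hall : ∀ t : S, M.val (n + 1) t)
    (hs : sat M (relTr (n + 1) φ) s) :
    ∀ (x : S) (i : ℕ), 1 ≤ i → i ≤ n + 1 →
      (sat (extModel M n) (Bform i) (Sum.inl x) ↔ M.val i x) := by
  intro x i hi1 hi2
  constructor
  · intro h
    rw [Bform] at h
    replace h := (sat_ex_iff _ _ _).1 h
    obtain ⟨t, hrel, hA⟩ := h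
    rw [Aform, sat_conj_iff] at hA
    obtain ⟨hchi, -⟩ := hA
    match t with
    | Sum.inl y =>
        obtain ⟨k, rfl⟩ : ∃ k, i = k + 1 := ⟨i - 1, by omega⟩
        rw [chi] at hchi
        replace hchi := (sat_conj_iff _ _ _ _).1 hchi
        have hv : (0 : ℕ) ≠ 0 ∧ M.val 0 y := hchi.1
        exact absurd rfl hv.1
    | Sum.inr ⟨j, t⟩ =>
        have hrel' : M.val (j.val + 1) x ∧ t.val = 0 := hrel
        replace hchi := (chi_char M n j _ _).1 hchi
        rcases hchi with ⟨h3, -⟩ | ⟨-, hk⟩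
        · omega
        · rw [hk]
          exact hrel'.1
  · intro h
    rw [Bform]
    refine (sat_ex_iff _ _ _).2 ?_
    have hj : i - 1 < n + 1 := by omega
    set j : Fin (n + 1) := ⟨i - 1, hj⟩ with hjdef
    have hji : j.val + 1 = i := by simp [hjdef]; omega
    refine ⟨Sum.inr ⟨j, ⟨0, by omega⟩⟩, ⟨hji ▸ h, rfl⟩, ?_⟩
    rw [Aform]
    refine (sat_conj_iff _ _ _ _).2 ?_
    constructor
    · refine (chi_char M n j _ _).2 ?_
      right
      exact ⟨rfl, hji.symm⟩
    · refine (sat_ex_iff _ _ _).2 ?_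
      refine ⟨Sum.inr ⟨j, ⟨1, by omega⟩⟩, ?_, ?_⟩
      · refine (rel_chain_iff M n _ _ _).2 ?_
        exact ⟨_, rfl, Or.inl ⟨rfl, Or.inl rfl⟩⟩
      · refine (sat_ag_iff _ _ _).2 ?_
        intro π hp h0 k
        have hstay := path_stay M n j ⟨1, by omega⟩ (Or.inl rfl) π hp h0 k
        rw [hstay]
        intro hv
        have hv' : (extModel M n).val 0 (Sum.inr ⟨j, ⟨1, by omega⟩⟩) := hv
        replace hv' := (val0_chain M n j _).1 hv'
        simp at hv'
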